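/- Let p be a prime and let U(p;k,h) denote the number of u ∈ {0,...,p-1} for which q_p(u) ≡ z (mod p) for some z ∈ [k+1, k+h]. Then U(p;k,h) ≤ h^{1/2} · p^{1/2 + o(1)} as p → ∞; more precisely, U(p;k,h)^2 ≤ C_ε · h · p^{1+ε} for any ε > 0 and a constant C_ε depending only on ε. -/

import Mathlib

/-- The Fermat quotient `q_p(u)`: the unique integer in `[0, p-1]` congruent to
`(u^(p-1) - 1)/p` modulo `p` when `gcd(u,p) = 1`, and `0` on multiples of `p`. -/
def fermatQuotient (p : ℕ) (u : ℤ) : ℤ :=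
  if (p : ℤ) ∣ u then 0 else ((u ^ (p - 1) - 1) / (p : ℤ)) % (p : ℤ)

open Finset

lemma fermat_dvd {p : ℕ} (hp : p.Prime) {u : ℤ} (hu : ¬ (p:ℤ) ∣ u) :
    (p:ℤ) ∣ u ^ (p-1) - 1 := by
  haveI := Fact.mk hp
  have h1 : ((u : ZMod p)) ^ (p-1) = 1 :=
    ZMod.pow_card_sub_one_eq_one (by simpa [Ne, ZMod.intCast_zmod_eq_zero_iff_dvd] using hu)
  have : ((u ^ (p-1) - 1 : ℤ) : ZMod p) = 0 := by push_cast [h1]; ring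
  exact (ZMod.intCast_zmod_eq_zero_iff_dvd _ p).mp this

lemma fq_eq {p : ℕ} (hp : p.Prime) {u a : ℤ} (hu : ¬ (p:ℤ) ∣ u)
    (ha : u ^ (p-1) - 1 = (p:ℤ) * a) : fermatQuotient p u = a % (p:ℤ) := by
  rw [fermatQuotient, if_neg hu, ha, Int.mul_ediv_cancel_left _ (by exact_mod_cast hp.ne_zero)]

lemma fq_add {p : ℕ} (hp : p.Prime) {u v : ℤ} (hu : ¬(p:ℤ) ∣ u) (hv : ¬(p:ℤ) ∣ v) :
    fermatQuotient p (u * v) ≡ fermatQuotient p u + fermatQuotient p v [ZMOD (p:ℤ)] := by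
  obtain ⟨a, ha⟩ := fermat_dvd hp hu
  obtain ⟨b, hb⟩ := fermat_dvd hp hv
  have hpi : Prime (p:ℤ) := Nat.prime_iff_prime_int.mp hp
  have huv : ¬ (p:ℤ) ∣ u * v := fun hd => by rcases hpi.dvd_mul.mp hd with h | h <;> tauto
  have hc : (u * v) ^ (p-1) - 1 = (p:ℤ) * (a + b + (p:ℤ) * a * b) := by
    have h1 : u ^ (p-1) = 1 + (p:ℤ) * a := by linarith
    have h2 : v ^ (p-1) = 1 + (p:ℤ) * b := by linarith
    rw [mul_pow, h1, h2]; ring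
  rw [fq_eq hp huv hc, fq_eq hp hu ha, fq_eq hp hv hb]
  have h1 : ∀ x : ℤ, x % (p:ℤ) ≡ x [ZMOD (p:ℤ)] := fun x => Int.emod_emod_of_dvd x dvd_rfl
  have h2 : (p:ℤ) * a * b ≡ 0 [ZMOD (p:ℤ)] := Int.modEq_zero_iff_dvd.mpr ⟨a * b, by ring⟩
  calc (a + b + (p:ℤ) * a * b) % (p:ℤ) ≡ a + b + (p:ℤ) * a * b [ZMOD (p:ℤ)] := h1 _
    _ ≡ (a + b) + 0 [ZMOD (p:ℤ)] := Int.ModEq.add (Int.ModEq.refl (a + b)) h2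
    _ = a + b := by ring
    _ ≡ a % (p:ℤ) + b % (p:ℤ) [ZMOD (p:ℤ)] := Int.ModEq.add (h1 a).symm (h1 b).symm

lemma fiber_card {p : ℕ} (hp : p.Prime) (z : ℤ) :
    (((Finset.range (p^2)).filter
      (fun w : ℕ => fermatQuotient p (w:ℤ) ≡ z [ZMOD (p:ℤ)])).card) ≤ 2 * p := by
  classical
  set S := (Finset.range (p^2)).filter
      (fun w : ℕ => fermatQuotient p (w:ℤ) ≡ z [ZMOD (p:ℤ)]) with hS
  set A := S.filter (fun w : ℕ => ¬ (p:ℤ) ∣ (w:ℤ)) with hA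
  set M := S.filter (fun w : ℕ => (p:ℤ) ∣ (w:ℤ)) with hM
  have hp0 : 0 < p := hp.pos
  have hp2 : 2 ≤ p := hp.two_le
  have hsplit : S.card ≤ A.card + M.card := by
    calc S.card ≤ (A ∪ M).card := Finset.card_le_card (fun w hw => by
          by_cases hd : (p:ℤ) ∣ (w:ℤ)
          · exact Finset.mem_union_right _ (Finset.mem_filter.mpr ⟨hw, hd⟩)
          · exact Finset.mem_union_left _ (Finset.mem_filter.mpr ⟨hw, hd⟩))
      _ ≤ A.card + M.card := Finset.card_union_le _ _
  -- bound M
  have hMcard : M.card ≤ p := by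
    rw [← Finset.card_range p]
    apply Finset.card_le_card_of_injOn (fun w => w / p) ?_ ?_
    · intro w hw
      simp only [hM, hS, Finset.mem_coe, Finset.mem_filter, Finset.mem_range] at hw
      simp only [Finset.mem_coe, Finset.mem_range]
      exact Nat.div_lt_of_lt_mul (by rw [← pow_two]; exact hw.1.1)
    · intro w1 h1 w2 h2 heq
      have heq' : w1 / p = w2 / p := heq
      simp only [hM, hS, Finset.coe_filter, Set.mem_setOf_eq, Finset.mem_filter,
        Finset.mem_range] at h1 h2
      have d1 : p ∣ w1 := by exact_mod_cast h1.2
      have d2 : p ∣ w2 := by exact_mod_cast h2.2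
      rw [← Nat.div_mul_cancel d1, ← Nat.div_mul_cancel d2, heq']
  -- bound A
  have hAcard : A.card ≤ p := by
    rw [← Finset.card_range p]
    apply Finset.card_le_card_of_injOn (fun w => w % p) ?_ ?_
    · intro w _; simp [Finset.mem_range, Nat.mod_lt _ hp0]
    · intro w1 h1 w2 h2 heq
      have heq' : w1 % p = w2 % p := heq
      simp only [hA, hS, Finset.coe_filter, Set.mem_setOf_eq, Finset.mem_filter,
        Finset.mem_range] at h1 h2
      obtain ⟨⟨hlt1, hfq1⟩, hnd1⟩ := h1
      obtain ⟨⟨hlt2, hfq2⟩, hnd2⟩ := h2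
      obtain ⟨t1, ht1⟩ := fermat_dvd hp hnd1
      obtain ⟨t2, ht2⟩ := fermat_dvd hp hnd2
      have hfq12 : t1 % (p:ℤ) = t2 % (p:ℤ) := by
        have e1 := fq_eq hp hnd1 ht1
        have e2 := fq_eq hp hnd2 ht2
        have := hfq1.trans hfq2.symm
        rw [e1, e2] at this
        simpa [Int.ModEq, Int.emod_emod_of_dvd] using this
      have hdvd2 : ((p:ℤ))^2 ∣ (w1:ℤ)^(p-1) - (w2:ℤ)^(p-1) := by
        obtain ⟨s, hs⟩ := Int.ModEq.dvd (hfq12 : Int.ModEq (p:ℤ) t1 t2)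
        refine ⟨-s, ?_⟩
        have : (w1:ℤ)^(p-1) - (w2:ℤ)^(p-1) = (p:ℤ) * (t1 - t2) := by
          rw [mul_sub, ← ht1, ← ht2]; ring
        rw [this, show t1 - t2 = -(t2 - t1) by ring, hs]; ring
      have hmodZ : (w1:ℤ) ≡ (w2:ℤ) [ZMOD (p:ℤ)] := by
        unfold Int.ModEq
        rw [← Int.natCast_mod, ← Int.natCast_mod, heq']
      set G : ℤ := ∑ i ∈ Finset.range (p-1), (w1:ℤ)^i * (w2:ℤ)^(p-1-1-i) with hG
      have hgeom : G * ((w1:ℤ) - (w2:ℤ)) = (w1:ℤ)^(p-1) - (w2:ℤ)^(p-1) :=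
        geom_sum₂_mul _ _ _
      haveI := Fact.mk hp
      have hndG : ¬ (p:ℤ) ∣ G := by
        intro hd
        have hcast : ((G : ℤ) : ZMod p) = 0 := (ZMod.intCast_zmod_eq_zero_iff_dvd _ p).mpr hd
        have hx : ((w1 : ZMod p)) = (w2 : ZMod p) :=
          (ZMod.natCast_eq_natCast_iff _ _ _).mpr heq'
        have hxne : (w1 : ZMod p) ≠ 0 := by
          rw [Ne, ZMod.natCast_eq_zero_iff]
          intro hdd
          exact hnd1 (by exact_mod_cast Int.natCast_dvd_natCast.mpr hdd)
        rw [hG] at hcast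
        push_cast at hcast
        rw [← hx] at hcast
        have hsum : ∀ i ∈ Finset.range (p-1),
            (w1 : ZMod p)^i * (w1 : ZMod p)^(p-1-1-i) = (w1 : ZMod p)^(p-2) := by
          intro i hi
          rw [Finset.mem_range] at hi
          rw [← pow_add]
          congr 1
          omega
        rw [Finset.sum_congr rfl hsum, Finset.sum_const, Finset.card_range,
          nsmul_eq_mul] at hcast
        have h1 : ((p-1 : ℕ) : ZMod p) ≠ 0 := by
          rw [Ne, ZMod.natCast_eq_zero_iff]
          intro hdd
          have := Nat.le_of_dvd (by omega) hdd
          omega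
        exact (mul_ne_zero h1 (pow_ne_zero _ hxne)) hcast
      obtain ⟨e, he⟩ := Int.ModEq.dvd hmodZ
      have hid : (w1:ℤ)^(p-1) - (w2:ℤ)^(p-1) = (p:ℤ) * (G * -e) := by
        rw [← hgeom, show (w1:ℤ) - (w2:ℤ) = -((w2:ℤ) - (w1:ℤ)) by ring, he]; ring
      have h22 : (p:ℤ) * (p:ℤ) ∣ (p:ℤ) * (G * -e) := by
        rw [← hid, ← pow_two]; exact hdvd2
      have hpe : (p:ℤ) ∣ G * -e :=
        (mul_dvd_mul_iff_left (by exact_mod_cast hp.ne_zero : (p:ℤ) ≠ 0)).mp h22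
      have hpi : Prime (p:ℤ) := Nat.prime_iff_prime_int.mp hp
      have hpe' : (p:ℤ) ∣ e := by
        have := (hpi.dvd_mul.mp hpe).resolve_left hndG
        exact dvd_neg.mp this
      have hfin : ((p:ℤ))^2 ∣ (w1:ℤ) - (w2:ℤ) := by
        obtain ⟨f, hf⟩ := hpe'
        exact ⟨-f, by rw [show (w1:ℤ) - (w2:ℤ) = -((w2:ℤ) - (w1:ℤ)) by ring, he, hf]; ring⟩
      have : (w1:ℤ) - (w2:ℤ) = 0 := by
        apply Int.eq_zero_of_abs_lt_dvd hfin
        have e1 : (w1:ℤ) < (p:ℤ)^2 := by exact_mod_cast hlt1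
        have e2 : (w2:ℤ) < (p:ℤ)^2 := by exact_mod_cast hlt2
        rw [abs_sub_lt_iff]
        constructor <;> [linarith [Int.natCast_nonneg w2]; linarith [Int.natCast_nonneg w1]]
      exact_mod_cast sub_eq_zero.mp this
  omega
lemma divisor_bound (ε : ℝ) (hε : 0 < ε) : ∃ C : ℝ, 0 < C ∧ ∀ n : ℕ, 1 ≤ n →
    (n.divisors.card : ℝ) ≤ C * (n : ℝ) ^ ε := by
  have hlog2 : 0 < Real.log 2 := Real.log_pos (by norm_num)
  set B : ℝ := max 1 (1 / (ε * Real.log 2)) with hB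
  have hB1 : 1 ≤ B := le_max_left _ _
  have hB2 : 1 ≤ B * (ε * Real.log 2) := by
    have h1 : 1 / (ε * Real.log 2) ≤ B := le_max_right _ _
    have h2 : 0 < ε * Real.log 2 := mul_pos hε hlog2
    calc 1 = (1 / (ε * Real.log 2)) * (ε * Real.log 2) := by field_simp
    _ ≤ B * (ε * Real.log 2) := by gcongr
  set N : ℕ := ⌈(2:ℝ) ^ (1/ε)⌉₊ with hN
  refine ⟨B ^ (N + 1), pow_pos (lt_of_lt_of_le one_pos hB1) _, fun n hn => ?_⟩
  have hn0 : n ≠ 0 := by omega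
  -- per-factor bound
  have key : ∀ q ∈ n.primeFactors,
      ((n.factorization q + 1 : ℕ) : ℝ) ≤
        (if q ≤ N then B else 1) * (q : ℝ) ^ ((n.factorization q : ℝ) * ε) := by
    intro q hq
    have hqp : q.Prime := Nat.prime_of_mem_primeFactors hq
    have hq2 : (2:ℝ) ≤ (q:ℝ) := by exact_mod_cast hqp.two_le
    set a : ℕ := n.factorization q
    have hqpos : (0:ℝ) < q := by linarith
    by_cases hsm : q ≤ N
    · simp only [if_pos hsm]
      -- small prime case : a+1 ≤ B * q^(aε)
      have h2le : (2:ℝ) ^ ((a:ℝ) * ε) ≤ (q:ℝ) ^ ((a:ℝ) * ε) :=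
        Real.rpow_le_rpow (by norm_num) hq2 (by positivity)
      have hexp : (a:ℝ) * ε * Real.log 2 + 1 ≤ (2:ℝ) ^ ((a:ℝ) * ε) := by
        rw [Real.rpow_def_of_pos (by norm_num : (0:ℝ) < 2)]
        have := Real.add_one_le_exp ((a:ℝ) * ε * Real.log 2)
        rw [mul_comm (Real.log 2)]
        linarith
      have ha0 : (0:ℝ) ≤ (a:ℝ) := Nat.cast_nonneg _
      push_cast
      nlinarith [mul_le_mul_of_nonneg_left h2le (le_trans zero_le_one hB1),
        mul_le_mul_of_nonneg_left hexp (le_trans zero_le_one hB1)]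
    · simp only [if_neg hsm, one_mul]
      -- large prime: q^ε ≥ 2
      have hqN : (2:ℝ) ^ (1/ε) ≤ (q:ℝ) := by
        have : (2:ℝ) ^ (1/ε) ≤ (N:ℝ) := Nat.le_ceil _
        have : (N:ℝ) ≤ (q:ℝ) := by exact_mod_cast Nat.le_of_not_le hsm
        linarith [Nat.le_ceil ((2:ℝ) ^ (1/ε))]
      have h2q : (2:ℝ) ≤ (q:ℝ) ^ ε := by
        calc (2:ℝ) = ((2:ℝ) ^ (1/ε)) ^ ε := by
              rw [← Real.rpow_mul (by norm_num), one_div_mul_cancel hε.ne', Real.rpow_one]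
        _ ≤ (q:ℝ) ^ ε := Real.rpow_le_rpow (by positivity) hqN hε.le
      calc ((a + 1 : ℕ) : ℝ) ≤ (2:ℝ) ^ a := by exact_mod_cast (Nat.lt_two_pow_self (n := a))
      _ ≤ ((q:ℝ) ^ ε) ^ a := pow_le_pow_left₀ (by norm_num) h2q a
      _ = (q:ℝ) ^ ((a:ℝ) * ε) := by
          rw [← Real.rpow_natCast ((q:ℝ) ^ ε) a, ← Real.rpow_mul hqpos.le, mul_comm]
  -- assemble
  have hτ : (n.divisors.card : ℝ) = ∏ q ∈ n.primeFactors, ((n.factorization q + 1 : ℕ) : ℝ) := by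
    rw [Nat.card_divisors hn0]; push_cast; ring
  have hnε : (n:ℝ) ^ ε = ∏ q ∈ n.primeFactors, (q:ℝ) ^ ((n.factorization q : ℝ) * ε) := by
    conv_lhs => rw [← Nat.factorization_prod_pow_eq_self hn0]
    rw [Nat.prod_factorization_eq_prod_primeFactors]
    push_cast
    rw [← Real.finset_prod_rpow _ _ (fun i _ => by positivity)]
    refine Finset.prod_congr rfl fun q hq => ?_
    rw [← Real.rpow_natCast (q:ℝ) (n.factorization q), ← Real.rpow_mul (Nat.cast_nonneg q)]
  rw [hτ, hnε]
  calc ∏ q ∈ n.primeFactors, ((n.factorization q + 1 : ℕ) : ℝ)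
      ≤ ∏ q ∈ n.primeFactors, (if q ≤ N then B else 1) * (q : ℝ) ^ ((n.factorization q : ℝ) * ε) :=
        Finset.prod_le_prod (fun q _ => by positivity) key
    _ = (∏ q ∈ n.primeFactors, (if q ≤ N then B else 1)) *
        ∏ q ∈ n.primeFactors, (q : ℝ) ^ ((n.factorization q : ℝ) * ε) := by
        rw [Finset.prod_mul_distrib]
    _ ≤ B ^ (N + 1) * ∏ q ∈ n.primeFactors, (q : ℝ) ^ ((n.factorization q : ℝ) * ε) := by
        apply mul_le_mul_of_nonneg_right ?_ (Finset.prod_nonneg fun q _ => by positivity)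
        calc ∏ q ∈ n.primeFactors, (if q ≤ N then B else 1)
            = B ^ (n.primeFactors.filter (· ≤ N)).card := by
              rw [Finset.prod_ite, Finset.prod_const, Finset.prod_const, one_pow, mul_one]
          _ ≤ B ^ (N + 1) := by
              apply pow_le_pow_right₀ hB1
              calc (n.primeFactors.filter (· ≤ N)).card ≤ (Finset.range (N+1)).card := by
                    apply Finset.card_le_card
                    intro q hq
                    simp only [Finset.mem_filter] at hq
                    simp [Nat.lt_succ_iff, hq.2]
                _ = N + 1 := Finset.card_range _

open Classical in
theorem concentration_bound :
    ∀ ε : ℝ, 0 < ε → ∃ C : ℝ, 0 < C ∧ ∀ p : ℕ, p.Prime → ∀ k : ℤ, ∀ h : ℕ, 1 ≤ h →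
      ((((Finset.range p).filter (fun u : ℕ => ∃ z : ℤ, k + 1 ≤ z ∧ z ≤ k + h ∧
          fermatQuotient p (u : ℤ) ≡ z [ZMOD (p : ℤ)])).card : ℝ)) ^ 2 ≤
        C * h * (p : ℝ) ^ ((1 : ℝ) + ε) := by
  intro ε hε
  obtain ⟨C₀, hC₀, hdiv⟩ := divisor_bound (ε/2) (by linarith)
  refine ⟨8*C₀ + 2, by positivity, ?_⟩
  intro p hp k h hh
  have hp0 : 0 < p := hp.pos
  have hp2 : 2 ≤ p := hp.two_le
  set S := (Finset.range p).filter (fun u : ℕ => ∃ z : ℤ, k + 1 ≤ z ∧ z ≤ k + h ∧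
      fermatQuotient p (u:ℤ) ≡ z [ZMOD (p:ℤ)]) with hSdef
  set S' := S.erase 0 with hS'def
  have hmem : ∀ u ∈ S', u < p ∧ ¬ (p:ℤ) ∣ (u:ℤ) ∧
      ∃ z : ℤ, k + 1 ≤ z ∧ z ≤ k + h ∧ fermatQuotient p (u:ℤ) ≡ z [ZMOD (p:ℤ)] := by
    intro u hu
    rw [hS'def, Finset.mem_erase, hSdef, Finset.mem_filter, Finset.mem_range] at hu
    obtain ⟨hu0, hup, hz⟩ := hu
    refine ⟨hup, ?_, hz⟩
    intro hd
    have : p ∣ u := by exact_mod_cast hd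
    have := Nat.le_of_dvd (Nat.pos_of_ne_zero hu0) this
    omega
  set W := (Finset.range (p^2)).filter (fun w : ℕ => ∃ z : ℤ, 2*k + 2 ≤ z ∧ z ≤ 2*k + 2*h ∧
      fermatQuotient p (w:ℤ) ≡ z [ZMOD (p:ℤ)]) with hWdef
  have hmap : ∀ x ∈ S' ×ˢ S', x.1 * x.2 ∈ W := by
    rintro ⟨u, v⟩ hx
    rw [Finset.mem_product] at hx
    obtain ⟨hup, hnu, zu, hzu1, hzu2, hzu3⟩ := hmem _ hx.1
    obtain ⟨hvp, hnv, zv, hzv1, hzv2, hzv3⟩ := hmem _ hx.2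
    rw [hWdef, Finset.mem_filter, Finset.mem_range]
    refine ⟨by rw [pow_two]; exact Nat.mul_lt_mul'' hup hvp, zu + zv, by linarith, by linarith, ?_⟩
    have : fermatQuotient p ((u:ℤ) * (v:ℤ)) ≡ zu + zv [ZMOD (p:ℤ)] :=
      (fq_add hp hnu hnv).trans (hzu3.add hzv3)
    simpa using this
  have hcount : (S' ×ˢ S').card = ∑ w ∈ W, ((S' ×ˢ S').filter (fun x => x.1 * x.2 = w)).card :=
    Finset.card_eq_sum_card_fiberwise hmap
  have hfiber : ∀ w ∈ W, ((S' ×ˢ S').filter (fun x => x.1*x.2 = w)).card ≤ w.divisors.card := by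
    intro w _
    apply Finset.card_le_card_of_injOn (fun x => x.1)
    · rintro ⟨u, v⟩ hx
      rw [Finset.mem_coe, Finset.mem_filter, Finset.mem_product] at hx
      obtain ⟨⟨hu, hv⟩, hw⟩ := hx
      have hu0 : u ≠ 0 := Finset.ne_of_mem_erase hu
      have hv0 : v ≠ 0 := Finset.ne_of_mem_erase hv
      have hw' : u * v = w := hw
      exact Nat.mem_divisors.mpr ⟨⟨v, hw'.symm⟩, by rw [← hw']; exact Nat.mul_ne_zero hu0 hv0⟩
    · rintro ⟨u1, v1⟩ h1 ⟨u2, v2⟩ h2 heq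
      simp only [Finset.coe_filter, Set.mem_setOf_eq, Finset.mem_product] at h1 h2
      have heq' : u1 = u2 := heq
      subst heq'
      have hu0 : u1 ≠ 0 := Finset.ne_of_mem_erase h1.1.1
      have : v1 = v2 := Nat.eq_of_mul_eq_mul_left (Nat.pos_of_ne_zero hu0)
        (h1.2.trans h2.2.symm)
      simp [this]
  have hWcard : W.card ≤ (2*h - 1) * (2*p) := by
    have hsub : W ⊆ (Finset.range (2*h - 1)).biUnion (fun j =>
        (Finset.range (p^2)).filter
          (fun w : ℕ => fermatQuotient p (w:ℤ) ≡ (2*k+2+j : ℤ) [ZMOD (p:ℤ)])) := by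
      intro w hw
      rw [hWdef, Finset.mem_filter, Finset.mem_range] at hw
      obtain ⟨hwp, z, hz1, hz2, hz3⟩ := hw
      rw [Finset.mem_biUnion]
      refine ⟨(z - (2*k+2)).toNat, ?_, ?_⟩
      · rw [Finset.mem_range]
        have h1 : z - (2*k+2) ≤ 2*h - 2 := by push_cast; linarith
        have h2 : (0:ℤ) ≤ z - (2*k+2) := by linarith
        omega
      · rw [Finset.mem_filter, Finset.mem_range]
        refine ⟨hwp, ?_⟩
        have h2 : (0:ℤ) ≤ z - (2*k+2) := by linarith
        have : (2*k+2 + ((z - (2*k+2)).toNat : ℤ)) = z := by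
          rw [Int.toNat_of_nonneg h2]; ring
        rwa [this]
    calc W.card ≤ ∑ j ∈ Finset.range (2*h-1), ((Finset.range (p^2)).filter
          (fun w : ℕ => fermatQuotient p (w:ℤ) ≡ (2*k+2+j : ℤ) [ZMOD (p:ℤ)])).card :=
        le_trans (Finset.card_le_card hsub) (Finset.card_biUnion_le)
      _ ≤ ∑ j ∈ Finset.range (2*h-1), 2*p :=
        Finset.sum_le_sum (fun j _ => fiber_card hp _)
      _ = (2*h - 1) * (2*p) := by rw [Finset.sum_const, Finset.card_range, smul_eq_mul]
  -- real arithmetic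
  have hppos : (0:ℝ) < (p:ℝ) := by exact_mod_cast hp0
  have hτ : ∀ w ∈ W, ((w.divisors.card : ℕ) : ℝ) ≤ C₀ * (p:ℝ) ^ ε := by
    intro w hw
    rw [hWdef, Finset.mem_filter, Finset.mem_range] at hw
    have hpe : (0:ℝ) < (p:ℝ) ^ ε := Real.rpow_pos_of_pos hppos _
    rcases Nat.eq_zero_or_pos w with rfl | hw1
    · simp [Nat.divisors_zero]; positivity
    · calc ((w.divisors.card : ℕ) : ℝ) ≤ C₀ * (w:ℝ) ^ (ε/2) := hdiv w hw1
        _ ≤ C₀ * ((p:ℝ)^(2:ℕ)) ^ (ε/2) := by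
            have hwle : (w:ℝ) ≤ (p:ℝ)^(2:ℕ) := by exact_mod_cast hw.1.le
            exact mul_le_mul_of_nonneg_left
              (Real.rpow_le_rpow (Nat.cast_nonneg _) hwle (by linarith)) hC₀.le
        _ = C₀ * (p:ℝ) ^ ε := by
            rw [← Real.rpow_natCast (p:ℝ) 2, ← Real.rpow_mul hppos.le]
            congr 1
            ring_nf
  have key : ((S'.card : ℕ) : ℝ)^2 ≤ 4 * C₀ * h * (p:ℝ) ^ ((1:ℝ) + ε) := by
    have h1 : ((S'.card : ℕ) : ℝ)^2 = (((S' ×ˢ S').card : ℕ) : ℝ) := by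
      rw [Finset.card_product]; push_cast; ring
    have h2 : (((S' ×ˢ S').card : ℕ) : ℝ) ≤ ∑ w ∈ W, ((w.divisors.card : ℕ) : ℝ) := by
      rw [hcount]
      push_cast
      exact Finset.sum_le_sum (fun w hw => by exact_mod_cast hfiber w hw)
    have h3 : ∑ w ∈ W, ((w.divisors.card : ℕ) : ℝ) ≤ (W.card : ℝ) * (C₀ * (p:ℝ)^ε) := by
      calc ∑ w ∈ W, ((w.divisors.card : ℕ) : ℝ) ≤ ∑ w ∈ W, C₀ * (p:ℝ)^ε :=
            Finset.sum_le_sum hτ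
        _ = (W.card : ℝ) * (C₀ * (p:ℝ)^ε) := by rw [Finset.sum_const, nsmul_eq_mul]
    have h4 : (W.card : ℝ) ≤ 2*h*(2*p) := by
      have h5 : W.card ≤ 2*h*(2*p) :=
        le_trans hWcard (Nat.mul_le_mul_right _ (Nat.sub_le _ _))
      exact_mod_cast h5
    have hrpow : (p:ℝ) ^ ((1:ℝ) + ε) = (p:ℝ) * (p:ℝ)^ε := by
      rw [Real.rpow_add hppos, Real.rpow_one]
    have hpe : (0:ℝ) < (p:ℝ) ^ ε := Real.rpow_pos_of_pos hppos _
    calc ((S'.card : ℕ) : ℝ)^2 ≤ (W.card : ℝ) * (C₀ * (p:ℝ)^ε) := by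
          rw [h1]; exact h2.trans h3
      _ ≤ (2*h*(2*p)) * (C₀ * (p:ℝ)^ε) := by
          apply mul_le_mul_of_nonneg_right h4; positivity
      _ = 4 * C₀ * h * ((p:ℝ) * (p:ℝ)^ε) := by ring
      _ = 4 * C₀ * h * (p:ℝ) ^ ((1:ℝ) + ε) := by rw [hrpow]
  -- conclude
  have hcard : S.card ≤ S'.card + 1 := by
    by_cases h0 : (0:ℕ) ∈ S
    · rw [hS'def, Finset.card_erase_of_mem h0]; omega
    · rw [hS'def, Finset.erase_eq_of_notMem h0]; omega
  have hcR : ((S.card : ℕ) : ℝ) ≤ ((S'.card : ℕ) : ℝ) + 1 := by exact_mod_cast hcard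
  have hpge : (2:ℝ) ≤ (p:ℝ) ^ ((1:ℝ) + ε) := by
    calc (2:ℝ) ≤ (p:ℝ) := by exact_mod_cast hp2
      _ = (p:ℝ) ^ (1:ℝ) := (Real.rpow_one _).symm
      _ ≤ (p:ℝ) ^ ((1:ℝ) + ε) := Real.rpow_le_rpow_of_exponent_le
          (by exact_mod_cast hp0) (by linarith)
  have hhR : (1:ℝ) ≤ (h:ℝ) := by exact_mod_cast hh
  have hS0 : (0:ℝ) ≤ ((S.card : ℕ) : ℝ) := Nat.cast_nonneg _
  have hS'0 : (0:ℝ) ≤ ((S'.card : ℕ) : ℝ) := Nat.cast_nonneg _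
  have hhP : (2:ℝ) ≤ (h:ℝ) * (p:ℝ)^((1:ℝ)+ε) := by
    nlinarith [hpge, hhR, Real.rpow_pos_of_pos hppos ((1:ℝ)+ε)]
  nlinarith [key, hcR, hS0, hS'0, sq_nonneg (((S'.card : ℕ) : ℝ) - 1), hhP, hC₀]
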